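/- Let E ⊆ [0,∞) be a completely strongly porous set and let L̃ = {(lₙ,mₙ)} ∈ Ĩ_E^{sd} be universal. Then M(L̃) = C_E, where M(L̃) := limsup_{n→∞} lₙ/mₙ₊₁ and C_E is the supremum over almost decreasing sequences τ̃ in E∖{0} converging to 0 of C(τ̃) := inf{limsup_{n→∞} aₙ/τₙ : {(aₙ,bₙ)} ∈ Ĩ_E with τₙ ≤ aₙ eventually}. -/

import Mathlib

open Filter Set Topology ENNReal

/-- λ(E,0,h): the supremum of lengths of open subintervals of (0,h) disjoint from E. -/
noncomputable def lambda0 (E : Set ℝ) (h : ℝ) : ℝ :=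
  sSup {l : ℝ | ∃ a b : ℝ, 0 ≤ a ∧ a ≤ b ∧ b ≤ h ∧ Set.Ioo a b ∩ E = ∅ ∧ l = b - a}

/-- p⁺(E,0): the right porosity of E at 0. -/
noncomputable def porosity (E : Set ℝ) : ℝ :=
  Filter.limsup (fun h => lambda0 E h / h) (nhdsWithin 0 (Set.Ioi 0))

/-- 0 is an accumulation point of E (E ⊆ [0,∞), relative topology of [0,∞)). -/
def AccZero (E : Set ℝ) : Prop := ∀ ε > 0, ∃ x ∈ E, 0 < x ∧ x < ε

/-- (a,b) is a connected component of the exterior of E in [0,∞):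
an open interval in [0,∞) disjoint from E, maximal with this property. -/
def IsCompExt (E : Set ℝ) (a b : ℝ) : Prop :=
  0 ≤ a ∧ a < b ∧ Set.Ioo a b ∩ E = ∅ ∧
  ∀ c d : ℝ, 0 ≤ c → Set.Ioo a b ⊆ Set.Ioo c d → (c, d) ≠ (a, b) → Set.Ioo c d ∩ E ≠ ∅

/-- Membership in Ĩ_E. -/
def memIE (E : Set ℝ) (A : ℕ → ℝ × ℝ) : Prop :=
  (∀ n, 0 < (A n).1) ∧ (∀ n, IsCompExt E (A n).1 (A n).2) ∧
  Filter.Tendsto (fun n => (A n).1) Filter.atTop (nhds 0) ∧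
  Filter.Tendsto (fun n => ((A n).2 - (A n).1) / (A n).2) Filter.atTop (nhds 1)

/-- Almost decreasing sequence: eventually nonincreasing. -/
def AlmostDecr (τ : ℕ → ℝ) : Prop := ∀ᶠ n in Filter.atTop, τ (n + 1) ≤ τ n

/-- Membership in Ẽ₀^d: almost decreasing sequences in E∖{0} tending to 0. -/
def memE0d (E : Set ℝ) (τ : ℕ → ℝ) : Prop :=
  AlmostDecr τ ∧ Filter.Tendsto τ Filter.atTop (nhds 0) ∧ ∀ n, τ n ∈ E \ {0}

/-- Weak equivalence ≍ of sequences: c₁ aₙ ≤ γₙ ≤ c₂ aₙ for large n. -/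
def SeqEquiv (a γ : ℕ → ℝ) : Prop :=
  ∃ c₁ c₂ : ℝ, 0 < c₁ ∧ 0 < c₂ ∧ ∀ᶠ n in Filter.atTop, c₁ * a n ≤ γ n ∧ γ n ≤ c₂ * a n

/-- E is τ̃-strongly porous. -/
def StronglyPorousWrt (E : Set ℝ) (τ : ℕ → ℝ) : Prop :=
  ∃ A : ℕ → ℝ × ℝ, memIE E A ∧ SeqEquiv (fun n => (A n).1) τ

/-- E is completely strongly porous at 0. -/
def CSP (E : Set ℝ) : Prop := ∀ τ : ℕ → ℝ, memE0d E τ → StronglyPorousWrt E τ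

/-- Membership in Ĩ_E^d: first coordinates almost decreasing. -/
def memIEd (E : Set ℝ) (A : ℕ → ℝ × ℝ) : Prop := memIE E A ∧ AlmostDecr (fun n => (A n).1)

/-- Membership in Ĩ_E^{sd}: first coordinates eventually strictly decreasing. -/
def memIEsd (E : Set ℝ) (A : ℕ → ℝ × ℝ) : Prop :=
  memIE E A ∧ ∀ᶠ n in Filter.atTop, (A (n + 1)).1 < (A n).1

/-- The preorder Ã ⪯ L̃. -/
def Prec (A L : ℕ → ℝ × ℝ) : Prop :=
  ∃ N₁ : ℕ, ∃ f : ℕ → ℕ, ∀ n ≥ N₁, (A n).1 = (L (f n)).1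

/-- L̃ is universal: every Ã ∈ Ĩ_E^d satisfies Ã ⪯ L̃. -/
def Universal (E : Set ℝ) (L : ℕ → ℝ × ℝ) : Prop :=
  ∀ A : ℕ → ℝ × ℝ, memIEd E A → Prec A L

/-- M(L̃) = limsup lₙ/mₙ₊₁ (in [0,∞]). -/
noncomputable def Mq (L : ℕ → ℝ × ℝ) : ℝ≥0∞ :=
  Filter.limsup (fun n => ENNReal.ofReal ((L n).1 / (L (n + 1)).2)) Filter.atTop

/-- C(τ̃) = inf over {(aₙ,bₙ)} ∈ Ĩ_E with τₙ ≤ aₙ eventually of limsup aₙ/τₙ. -/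
noncomputable def Cseq (E : Set ℝ) (τ : ℕ → ℝ) : ℝ≥0∞ :=
  ⨅ (A : ℕ → ℝ × ℝ) (_ : memIE E A ∧ ∀ᶠ n in Filter.atTop, τ n ≤ (A n).1),
    Filter.limsup (fun n => ENNReal.ofReal ((A n).1 / τ n)) Filter.atTop

/-- C_E = sup over τ̃ ∈ Ẽ₀^d of C(τ̃). -/
noncomputable def CE (E : Set ℝ) : ℝ≥0∞ := ⨆ (τ : ℕ → ℝ) (_ : memE0d E τ), Cseq E τ

/-- E is uniformly strongly porous at 0. -/
def USP (E : Set ℝ) : Prop :=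
  ∃ c : ℝ, 0 < c ∧ ∀ τ : ℕ → ℝ, memE0d E τ → ∃ A : ℕ → ℝ × ℝ, memIE E A ∧
    (∀ᶠ n in Filter.atTop, τ n ≤ (A n).1) ∧
    Filter.limsup (fun n => ENNReal.ofReal ((A n).1 / τ n)) Filter.atTop ≤ ENNReal.ofReal c

/-- Two distinct components of the exterior are disjoint: if `a < c` then `b ≤ c`. -/
lemma compExt_disj {E : Set ℝ} {a b c d : ℝ} (h1 : IsCompExt E a b) (h2 : IsCompExt E c d)
    (hac : a < c) : b ≤ c := by
  by_contra h
  push_neg at h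
  rcases le_or_gt d b with hd | hd
  · have hne : (a, b) ≠ (c, d) := by
      intro he
      exact absurd (congrArg Prod.fst he) hac.ne
    exact h2.2.2.2 a b h1.1 (Set.Ioo_subset_Ioo hac.le hd) hne h1.2.2.1
  · have hne : (a, d) ≠ (a, b) := by
      intro he
      exact absurd (congrArg Prod.snd he) hd.ne'
    have hem : Set.Ioo a d ∩ E = ∅ := by
      apply Set.eq_empty_iff_forall_notMem.mpr
      intro x hx
      rcases hx with ⟨⟨hxa, hxd⟩, hxE⟩
      rcases lt_or_ge x b with hxb | hxb
      · have : x ∈ Set.Ioo a b ∩ E := ⟨⟨hxa, hxb⟩, hxE⟩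
        rw [h1.2.2.1] at this
        exact this
      · have : x ∈ Set.Ioo c d ∩ E := ⟨⟨lt_of_lt_of_le h hxb, hxd⟩, hxE⟩
        rw [h2.2.2.1] at this
        exact this
    exact h1.2.2.2 a d h1.1 (Set.Ioo_subset_Ioo le_rfl hd.le) hne hem

/-- E accumulates to the right endpoint of a component. -/
lemma compExt_rightacc {E : Set ℝ} {a b : ℝ} (h : IsCompExt E a b) {δ : ℝ} (hδ : 0 < δ) :
    ∃ x, x ∈ E ∧ b ≤ x ∧ x < b + δ := by
  have hab := h.2.1
  have hne : (a, b + δ) ≠ (a, b) := by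
    intro he
    have := congrArg Prod.snd he
    simp only at this
    linarith
  have hx := h.2.2.2 a (b + δ) h.1 (Set.Ioo_subset_Ioo le_rfl (by linarith)) hne
  obtain ⟨x, hx1, hx2⟩ := Set.nonempty_iff_ne_empty.mpr hx
  rcases hx1 with ⟨hxa, hxb⟩
  refine ⟨x, hx2, ?_, hxb⟩
  by_contra hxlt
  push_neg at hxlt
  have : x ∈ Set.Ioo a b ∩ E := ⟨⟨hxa, hxlt⟩, hx2⟩
  rw [h.2.2.1] at this
  exact this

theorem stmt9 (E : Set ℝ) (hE : E ⊆ Set.Ici 0) (hCSP : CSP E) (L : ℕ → ℝ × ℝ)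
    (hL : memIEsd E L) (hUniv : Universal E L) :
    Mq L = CE E := by
  obtain ⟨⟨hlpos, hcomp, hl0, hratio⟩, hsd⟩ := hL
  set l : ℕ → ℝ := fun n => (L n).1 with hl_def
  set m : ℕ → ℝ := fun n => (L n).2 with hm_def
  have hml : ∀ n, l n < m n := fun n => (hcomp n).2.1
  have hmpos : ∀ n, 0 < m n := fun n => (hlpos n).trans (hml n)
  -- l n / m n → 0
  have hlm0 : Tendsto (fun n => l n / m n) atTop (nhds 0) := by
    have h1 : Tendsto (fun n => 1 - (m n - l n) / m n) atTop (nhds 0) := by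
      have := hratio.const_sub 1
      simpa using this
    have heq : (fun n => 1 - (m n - l n) / m n) = fun n => l n / m n := by
      funext n
      have hmn := (hmpos n).ne'
      field_simp
      ring
    rwa [heq] at h1
  obtain ⟨N₀, hN₀⟩ := eventually_atTop.mp hsd
  -- antitonicity of l on [N₀, ∞)
  have lanti : ∀ i j, N₀ ≤ i → i ≤ j → l j ≤ l i := by
    intro i j hi hij
    induction j, hij using Nat.le_induction with
    | base => exact le_rfl
    | succ k hk ih => exact le_trans (hN₀ k (le_trans hi hk)).le ih
  have hm_le : ∀ n, N₀ ≤ n → m (n + 1) ≤ l n := by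
    intro n hn
    exact compExt_disj (hcomp (n + 1)) (hcomp n) (hN₀ n hn)
  -- m (n+1) → 0
  have hm1_0 : Tendsto (fun n => m (n + 1)) atTop (nhds 0) := by
    apply tendsto_of_tendsto_of_tendsto_of_le_of_le' tendsto_const_nhds hl0
    · exact Eventually.of_forall fun n => (hmpos (n + 1)).le
    · exact eventually_atTop.mpr ⟨N₀, hm_le⟩
  apply le_antisymm
  · -- Mq L ≤ CE E : construct τ near the right endpoints m (n+1)
    have hex : ∀ n : ℕ, ∃ x, x ∈ E ∧ m (n + 1) ≤ x ∧ x < m (n + 1) + m (n + 1) / ((n : ℝ) + 1) :=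
      fun n => compExt_rightacc (hcomp (n + 1))
        (div_pos (hmpos (n + 1)) (by positivity))
    choose τ hτE hτlb hτub using hex
    have hτpos : ∀ n, 0 < τ n := fun n => lt_of_lt_of_le (hmpos (n + 1)) (hτlb n)
    have hτub2 : ∀ n, τ n ≤ 2 * m (n + 1) := by
      intro n
      have h1 : m (n + 1) / ((n : ℝ) + 1) ≤ m (n + 1) := by
        apply div_le_self (hmpos (n + 1)).le
        have : (0:ℝ) ≤ (n : ℝ) := Nat.cast_nonneg n
        linarith
      have := hτub n
      linarith
    have hτ0 : Tendsto τ atTop (nhds 0) := by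
      apply tendsto_of_tendsto_of_tendsto_of_le_of_le' tendsto_const_nhds
        (by simpa using hm1_0.const_mul (2:ℝ))
      · exact Eventually.of_forall fun n => (hτpos n).le
      · exact Eventually.of_forall hτub2
    -- eventually l n < m n / 4
    have hquarter : ∀ᶠ n in atTop, l n < m n / 4 := by
      have h1 : ∀ᶠ n in atTop, l n / m n < 1/4 :=
        hlm0.eventually (gt_mem_nhds (by norm_num))
      filter_upwards [h1] with n hn
      have := hmpos n
      rw [div_lt_iff₀ this] at hn
      linarith
    have hτdecr : AlmostDecr τ := by
      rw [AlmostDecr, eventually_atTop]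
      obtain ⟨N₂, hN₂⟩ := eventually_atTop.mp hquarter
      refine ⟨max N₀ N₂ + 1, fun n hn => ?_⟩
      have hn0 : N₀ ≤ n + 1 := by omega
      have hn2 : N₂ ≤ n + 2 := by omega
      have h1 : τ (n + 1) ≤ 2 * m (n + 2) := hτub2 (n + 1)
      have h2 : m (n + 2) ≤ l (n + 1) := hm_le (n + 1) hn0
      have h3 : l (n + 1) < m (n + 1) / 4 := by
        have := hN₂ (n + 1) (by omega)
        exact this
      have h4 : m (n + 1) ≤ τ n := hτlb n
      have h5 := hmpos (n + 1)
      linarith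
    have hτmem : memE0d E τ := by
      refine ⟨hτdecr, hτ0, fun n => ⟨hτE n, ?_⟩⟩
      simp only [Set.mem_singleton_iff]
      exact (hτpos n).ne'
    -- Mq L ≤ Cseq E τ
    have hkey : Mq L ≤ Cseq E τ := by
      apply le_iInf₂
      intro A hA
      obtain ⟨⟨hapos, hacomp, ha0, haratio⟩, haτ⟩ := hA
      set a : ℕ → ℝ := fun n => (A n).1 with ha_def
      -- Step 1: eventually l n ≤ a n
      have hP3 : ∀ᶠ n in atTop, ∀ k ∈ Set.Iio N₀, a n < l k := by
        rw [eventually_all_finite (Set.finite_Iio N₀)]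
        intro k _
        exact ha0.eventually (gt_mem_nhds (hlpos k))
      have hla : ∀ᶠ n in atTop, l n ≤ a n := by
        by_contra hcon
        rw [Filter.not_eventually] at hcon
        simp only [not_le] at hcon
        -- all needed eventual conditions
        have hPall : ∀ᶠ n in atTop,
            N₀ ≤ n ∧ τ n ≤ a n ∧ ∀ k ∈ Set.Iio N₀, a n < l k := by
          filter_upwards [eventually_ge_atTop N₀, haτ, hP3] with n h1 h2 h3
          exact ⟨h1, h2, h3⟩
        have key : ∀ x : ℕ, ∃ n, x < n ∧ a n < l n ∧
            (N₀ ≤ n ∧ τ n ≤ a n ∧ ∀ k ∈ Set.Iio N₀, a n < l k) ∧ a n < a x := by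
          intro x
          have hev : ∀ᶠ n in atTop, x < n ∧
              (N₀ ≤ n ∧ τ n ≤ a n ∧ ∀ k ∈ Set.Iio N₀, a n < l k) ∧ a n < a x := by
            filter_upwards [eventually_gt_atTop x, hPall,
              ha0.eventually (gt_mem_nhds (hapos x))] with n h1 h2 h3
            exact ⟨h1, h2, h3⟩
          obtain ⟨n, hbad, h1, h2, h3⟩ := (hcon.and_eventually hev).exists
          exact ⟨n, h1, hbad, h2, h3⟩
        -- build the strictly decreasing subsequence
        let φ : ℕ → ℕ := fun j => Nat.rec (Classical.choose (key 0))
          (fun _ ih => Classical.choose (key ih)) j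
        have hφ0 := Classical.choose_spec (key 0)
        have hφsucc : ∀ j, φ j < φ (j + 1) ∧ a (φ (j + 1)) < l (φ (j + 1)) ∧
            (N₀ ≤ φ (j + 1) ∧ τ (φ (j + 1)) ≤ a (φ (j + 1)) ∧
              ∀ k ∈ Set.Iio N₀, a (φ (j + 1)) < l k) ∧ a (φ (j + 1)) < a (φ j) :=
          fun j => Classical.choose_spec (key (φ j))
        have hφprop : ∀ j, a (φ j) < l (φ j) ∧
            (N₀ ≤ φ j ∧ τ (φ j) ≤ a (φ j) ∧ ∀ k ∈ Set.Iio N₀, a (φ j) < l k) := by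
          intro j
          cases j with
          | zero => exact ⟨hφ0.2.1, hφ0.2.2.1⟩
          | succ i => exact ⟨(hφsucc i).2.1, (hφsucc i).2.2.1⟩
        have hφmono : StrictMono φ := strictMono_nat_of_lt_succ fun j => (hφsucc j).1
        have hφto : Tendsto φ atTop atTop := hφmono.tendsto_atTop
        -- B := A ∘ φ is in Ĩ_E^d
        have hB : memIEd E (fun j => A (φ j)) := by
          refine ⟨⟨fun j => hapos (φ j), fun j => hacomp (φ j), ?_, ?_⟩, ?_⟩
          · exact ha0.comp hφto
          · exact haratio.comp hφto
          · exact Eventually.of_forall fun j => ((hφsucc j).2.2.2).le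
        obtain ⟨N₁, g, hg⟩ := hUniv _ hB
        -- derive a contradiction at index M := φ N₁
        set M := φ N₁ with hM_def
        have hbad := (hφprop N₁).1
        have hMN₀ := (hφprop N₁).2.1
        have hMτ := (hφprop N₁).2.2.1
        have hMsmall := (hφprop N₁).2.2.2
        have heq : a M = l (g N₁) := hg N₁ le_rfl
        have haM : m (M + 1) ≤ a M := le_trans (hτlb M) hMτ
        set k := g N₁ with hk_def
        rcases lt_or_ge k N₀ with hk1 | hk1
        · exact absurd heq (ne_of_lt (hMsmall k hk1))
        · rcases le_or_gt k M with hk2 | hk2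
          · have : l M ≤ l k := lanti k M hk1 hk2
            linarith [heq ▸ this]
          · have h1 : l k ≤ l (M + 1) := lanti (M + 1) k (by omega) hk2
            have h2 : l (M + 1) < m (M + 1) := hml (M + 1)
            linarith [heq ▸ h1]
      -- Step 2: limsup bound
      apply ENNReal.le_of_forall_lt_one_mul_le
      intro c hc1
      rcases eq_or_ne c 0 with hc0 | hc0
      · simp [hc0]
      have hctop : c ≠ ⊤ := ne_top_of_lt hc1
      set δ := c.toReal with hδ_def
      have hδpos : 0 < δ := ENNReal.toReal_pos hc0 hctop
      have hδ1 : δ < 1 := by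
        have := (ENNReal.toReal_lt_toReal hctop ENNReal.one_ne_top).mpr hc1
        simpa using this
      have hδev : ∀ᶠ n : ℕ in atTop, δ * (1 + 1 / ((n : ℝ) + 1)) ≤ 1 := by
        have htend : Tendsto (fun n : ℕ => δ * (1 + 1 / ((n : ℝ) + 1))) atTop (nhds δ) := by
          have h1 := tendsto_one_div_add_atTop_nhds_zero_nat (𝕜 := ℝ)
          have h2 : Tendsto (fun n : ℕ => 1 + 1 / ((n : ℝ) + 1)) atTop (nhds 1) := by
            simpa using (tendsto_const_nhds (x := (1:ℝ))).add h1
          simpa using (tendsto_const_nhds (x := δ)).mul h2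
        filter_upwards [htend.eventually (gt_mem_nhds hδ1)] with n hn
        exact hn.le
      have hmul : c * Mq L =
          limsup (fun n => c * ENNReal.ofReal (l n / m (n + 1))) atTop :=
        (ENNReal.limsup_const_mul_of_ne_top hctop).symm
      rw [hmul]
      have hptle : ∀ᶠ n in atTop, c * ENNReal.ofReal (l n / m (n + 1)) ≤
          ENNReal.ofReal (a n / τ n) := by
        filter_upwards [hla, hδev, haτ] with n h1 h2 h3
        have hτmn : τ n < m (n + 1) * (1 + 1 / ((n : ℝ) + 1)) := by
          have := hτub n
          have hm := hmpos (n + 1)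
          rw [mul_add, mul_one, mul_one_div]
          exact this
        have hstep1 : δ * (l n / m (n + 1)) ≤ l n / τ n := by
          rw [mul_div_assoc']
          rw [div_le_div_iff₀ (hmpos (n + 1)) (hτpos n)]
          have hl := (hlpos n).le
          have h4 : δ * τ n ≤ m (n + 1) := by
            have h5 : δ * τ n ≤ δ * (m (n + 1) * (1 + 1 / ((n : ℝ) + 1))) :=
              mul_le_mul_of_nonneg_left hτmn.le hδpos.le
            have h6 : δ * (m (n + 1) * (1 + 1 / ((n : ℝ) + 1))) =
                m (n + 1) * (δ * (1 + 1 / ((n : ℝ) + 1))) := by ring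
            have h7 : m (n + 1) * (δ * (1 + 1 / ((n : ℝ) + 1))) ≤ m (n + 1) * 1 :=
              mul_le_mul_of_nonneg_left h2 (hmpos (n + 1)).le
            linarith
          nlinarith
        have hstep2 : l n / τ n ≤ a n / τ n :=
          div_le_div_of_nonneg_right h1 (hτpos n).le
        calc c * ENNReal.ofReal (l n / m (n + 1))
            = ENNReal.ofReal δ * ENNReal.ofReal (l n / m (n + 1)) := by
              rw [ENNReal.ofReal_toReal hctop]
          _ = ENNReal.ofReal (δ * (l n / m (n + 1))) := (ENNReal.ofReal_mul hδpos.le).symm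
          _ ≤ ENNReal.ofReal (a n / τ n) :=
              ENNReal.ofReal_le_ofReal (le_trans hstep1 hstep2)
      exact limsup_le_limsup hptle
    calc Mq L ≤ Cseq E τ := hkey
      _ ≤ CE E := le_iSup₂_of_le τ hτmem le_rfl
  · -- CE E ≤ Mq L
    apply iSup₂_le
    intro τ hτ
    have hτpos : ∀ n, 0 < τ n := by
      intro n
      have h1 := (hτ.2.2 n).1
      have h2 : τ n ≠ 0 := fun h => (hτ.2.2 n).2 (by simpa using h)
      exact lt_of_le_of_ne (hE h1) (Ne.symm h2)
    have hτ0 : Tendsto τ atTop (nhds 0) := hτ.2.1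
    have hex : ∀ n : ℕ, ∃ k, l (N₀ + k + 1) < τ n := by
      intro n
      have h1 : ∀ᶠ j in atTop, l j < τ n := hl0.eventually (gt_mem_nhds (hτpos n))
      obtain ⟨J, hJ⟩ := eventually_atTop.mp h1
      exact ⟨J, hJ (N₀ + J + 1) (by omega)⟩
    set f : ℕ → ℕ := fun n => N₀ + Nat.find (hex n) with hf_def
    have hfl : ∀ n, l (f n + 1) < τ n := fun n => Nat.find_spec (hex n)
    have hfge : ∀ n, τ n ≤ l N₀ → τ n ≤ l (f n) := by
      intro n hn
      rcases Nat.eq_zero_or_pos (Nat.find (hex n)) with h0 | hpos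
      · simp only [hf_def, h0, Nat.add_zero]
        exact hn
      · obtain ⟨k, hk⟩ := Nat.exists_eq_succ_of_ne_zero hpos.ne'
        have hmin := Nat.find_min (hex n) (by omega : k < Nat.find (hex n))
        push_neg at hmin
        have : f n = N₀ + k + 1 := by simp only [hf_def, hk]; omega
        rw [this]
        exact hmin
    have hτm : ∀ n, m (f n + 1) ≤ τ n := by
      intro n
      by_contra hcon
      push_neg at hcon
      have : τ n ∈ Set.Ioo (l (f n + 1)) (m (f n + 1)) ∩ E :=
        ⟨⟨hfl n, hcon⟩, (hτ.2.2 n).1⟩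
      rw [(hcomp (f n + 1)).2.2.1] at this
      exact this
    have hfto : Tendsto f atTop atTop := by
      rw [tendsto_atTop]
      intro J
      have hev : ∀ᶠ n in atTop, τ n < l (max J N₀ + 1) :=
        hτ0.eventually (gt_mem_nhds (hlpos _))
      filter_upwards [hev] with n hn
      by_contra hcontra
      push_neg at hcontra
      have h1 : f n + 1 ≤ max J N₀ + 1 := by
        have := le_max_left J N₀
        omega
      have h2 : l (max J N₀ + 1) ≤ l (f n + 1) :=
        lanti (f n + 1) (max J N₀ + 1) (by simp only [hf_def]; omega) h1
      linarith [hfl n]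
    have hA'IE : memIE E (fun n => L (f n)) := by
      refine ⟨fun n => hlpos (f n), fun n => hcomp (f n), ?_, ?_⟩
      · exact hl0.comp hfto
      · exact hratio.comp hfto
    have hev_le : ∀ᶠ n in atTop, τ n ≤ (L (f n)).1 := by
      filter_upwards [hτ0.eventually (gt_mem_nhds (hlpos N₀))] with n hn
      exact hfge n hn.le
    have h1 : Cseq E τ ≤
        limsup (fun n => ENNReal.ofReal ((L (f n)).1 / τ n)) atTop :=
      iInf₂_le (fun n => L (f n)) ⟨hA'IE, hev_le⟩
    apply le_trans h1
    have h2 : limsup (fun n => ENNReal.ofReal ((L (f n)).1 / τ n)) atTop ≤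
        limsup (fun n => ENNReal.ofReal (l (f n) / m (f n + 1))) atTop := by
      have hptle : ∀ᶠ n in atTop, ENNReal.ofReal ((L (f n)).1 / τ n) ≤
          ENNReal.ofReal (l (f n) / m (f n + 1)) :=
        Eventually.of_forall fun n => ENNReal.ofReal_le_ofReal
          (div_le_div_of_nonneg_left (hlpos (f n)).le (hmpos (f n + 1)) (hτm n))
      exact limsup_le_limsup hptle
    apply le_trans h2
    have h3 : (fun n => ENNReal.ofReal (l (f n) / m (f n + 1))) =
        (fun k => ENNReal.ofReal (l k / m (k + 1))) ∘ f := rfl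
    rw [h3, Filter.limsup_comp]
    exact limsup_le_limsup_of_le hfto
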